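/- Let β₂ ∈ (0,1), ε > 0, R > 0, and a₁, …, a_T ∈ [0, R²] with b_t = Σ_{j=1}^t β₂^{t−j} a_j and b₀ = 0. Then Σ_{t=1}^T a_t/(ε + b_t) ≤ ln(1 + R²/(ε(1 − β₂))) + T · ln(1/β₂). -/

import Mathlib

open Finset

private lemma b_succ (β : ℝ) (a : ℕ → ℝ) (T : ℕ) :
    ∑ j ∈ Finset.Icc 1 (T+1), β ^ (T+1-j) * a j
      = β * ∑ j ∈ Finset.Icc 1 T, β ^ (T-j) * a j + a (T+1) := by
  rw [Finset.sum_Icc_succ_top (by omega : 1 ≤ T+1), Finset.mul_sum]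
  simp only [Nat.sub_self, pow_zero, one_mul]
  congr 1
  apply Finset.sum_congr rfl
  intro j hj
  simp only [Finset.mem_Icc] at hj
  rw [show T + 1 - j = (T - j) + 1 by omega, pow_succ]
  ring

private lemma b_nonneg (β : ℝ) (hβ0 : 0 < β) (a : ℕ → ℝ) (T : ℕ)
    (ha : ∀ t ∈ Finset.Icc 1 T, 0 ≤ a t) :
    0 ≤ ∑ j ∈ Finset.Icc 1 T, β ^ (T-j) * a j := by
  apply Finset.sum_nonneg
  intro j hj
  exact mul_nonneg (pow_nonneg hβ0.le _) (ha j hj)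

private lemma key (β ε : ℝ) (hβ0 : 0 < β) (hβ1 : β < 1) (hε : 0 < ε) (a : ℕ → ℝ) :
    ∀ T, (∀ t ∈ Finset.Icc 1 T, 0 ≤ a t) →
    ∑ t ∈ Finset.Icc 1 T, a t / (ε + ∑ j ∈ Finset.Icc 1 t, β ^ (t-j) * a j)
      ≤ Real.log (ε + ∑ j ∈ Finset.Icc 1 T, β ^ (T-j) * a j) - Real.log ε
        + T * Real.log (1/β) := by
  intro T
  induction T with
  | zero => simp
  | succ T ih =>
    intro ha
    have ha' : ∀ t ∈ Finset.Icc 1 T, 0 ≤ a t := fun t ht => ha t (by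
      simp only [Finset.mem_Icc] at ht ⊢; omega)
    have haT : 0 ≤ a (T+1) := ha (T+1) (by simp)
    set bT := ∑ j ∈ Finset.Icc 1 T, β ^ (T-j) * a j with hbT
    have hbT0 : 0 ≤ bT := b_nonneg β hβ0 a T ha'
    have hrec := b_succ β a T
    rw [Finset.sum_Icc_succ_top (by omega : 1 ≤ T+1), hrec]
    have hu : 0 < ε + (β * bT + a (T+1)) := by positivity
    have hv : 0 < ε + β * bT := by positivity
    -- step bound: a(T+1)/u ≤ log u - log v
    have hstep : a (T+1) / (ε + (β * bT + a (T+1)))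
        ≤ Real.log (ε + (β * bT + a (T+1))) - Real.log (ε + β * bT) := by
      have h1 := Real.log_le_sub_one_of_pos (show 0 < (ε + β * bT) / (ε + (β * bT + a (T+1))) by positivity)
      rw [Real.log_div hv.ne' hu.ne'] at h1
      have : (ε + β * bT) / (ε + (β * bT + a (T+1))) - 1
          = - (a (T+1) / (ε + (β * bT + a (T+1)))) := by
        field_simp
        ring
      rw [this] at h1
      linarith
    -- log v ≥ log β + log (ε + bT)
    have hlogv : Real.log β + Real.log (ε + bT) ≤ Real.log (ε + β * bT) := by
      rw [← Real.log_mul (ne_of_gt hβ0) (by positivity)]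
      apply Real.log_le_log (by positivity)
      nlinarith
    have hlog1β : Real.log (1/β) = - Real.log β := by
      rw [one_div, Real.log_inv]
    have := ih ha'
    push_cast
    rw [hlog1β] at *
    linarith

private lemma b_le (β R : ℝ) (hβ0 : 0 < β) (hβ1 : β < 1) (hR : 0 < R) (a : ℕ → ℝ) :
    ∀ T, (∀ t ∈ Finset.Icc 1 T, 0 ≤ a t ∧ a t ≤ R ^ 2) →
    ∑ j ∈ Finset.Icc 1 T, β ^ (T-j) * a j ≤ R ^ 2 / (1 - β) := by
  intro T
  induction T with
  | zero =>
    intro _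
    have h1β : 0 < 1 - β := by linarith
    simp
    positivity
  | succ T ih =>
    intro ha
    have ha' : ∀ t ∈ Finset.Icc 1 T, 0 ≤ a t ∧ a t ≤ R ^ 2 := fun t ht => ha t (by
      simp only [Finset.mem_Icc] at ht ⊢; omega)
    have h1 := ih ha'
    have h2 := (ha (T+1) (by simp)).2
    rw [b_succ]
    have h1β : 0 < 1 - β := by linarith
    rw [le_div_iff₀ h1β] at h1 ⊢
    nlinarith

open Finset in
/-- Key summation lemma for Adam: with `b_t = ∑_{j=1}^t β₂^{t-j} a_j`
and `0 ≤ a_t ≤ R²`, one has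
`∑_{t=1}^T a_t/(ε + b_t) ≤ ln(1 + R²/(ε(1-β₂))) + T ln(1/β₂)`. -/
theorem stmt_5 (β ε R : ℝ) (hβ : β ∈ Set.Ioo (0 : ℝ) 1) (hε : 0 < ε) (hR : 0 < R)
    (T : ℕ) (a : ℕ → ℝ) (ha : ∀ t ∈ Finset.Icc 1 T, 0 ≤ a t ∧ a t ≤ R ^ 2) :
    ∑ t ∈ Finset.Icc 1 T, a t / (ε + ∑ j ∈ Finset.Icc 1 t, β ^ (t - j) * a j) ≤
      Real.log (1 + R ^ 2 / (ε * (1 - β))) + T * Real.log (1 / β) := by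
  obtain ⟨hβ0, hβ1⟩ := hβ
  have h1 := key β ε hβ0 hβ1 hε a T (fun t ht => (ha t ht).1)
  have h2 := b_le β R hβ0 hβ1 hR a T ha
  have h1β : 0 < 1 - β := by linarith
  have hbT0 : 0 ≤ ∑ j ∈ Finset.Icc 1 T, β ^ (T-j) * a j :=
    b_nonneg β hβ0 a T (fun t ht => (ha t ht).1)
  have hfin : Real.log (ε + ∑ j ∈ Finset.Icc 1 T, β ^ (T-j) * a j) - Real.log ε
      ≤ Real.log (1 + R ^ 2 / (ε * (1 - β))) := by
    have hx : 0 < 1 + R ^ 2 / (ε * (1 - β)) := by positivity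
    have hle : ε + ∑ j ∈ Finset.Icc 1 T, β ^ (T-j) * a j
        ≤ ε * (1 + R ^ 2 / (ε * (1 - β))) := by
      have : ε * (1 + R ^ 2 / (ε * (1 - β))) = ε + R ^ 2 / (1 - β) := by
        field_simp
      rw [this]; linarith
    have hcalc : Real.log (ε + ∑ j ∈ Finset.Icc 1 T, β ^ (T-j) * a j)
        ≤ Real.log ε + Real.log (1 + R ^ 2 / (ε * (1 - β))) := by
      rw [← Real.log_mul hε.ne' hx.ne']
      exact Real.log_le_log (by positivity) hle
    linarith
  linarith
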